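/- Let V be a finite-dimensional real vector space. For any linear hyperplane H in S²V, every extremal point of the convex set P(H ∩ S²V^{≥0}) is also an extremal point of P(S²V^{≥0}). Consequently, P(H ∩ S²V^{≥0}) equals the convex hull of the rank-one points H ∩ S²P(V). -/

import Mathlib

open Matrix

attribute [local instance] Matrix.normedAddCommGroup Matrix.normedSpace

namespace SliceAux

variable {n : ℕ}

local notation "Mat" => Matrix (Fin n) (Fin n) ℝ

lemma vecMulVec_mulVec' (u w x : Fin n → ℝ) : vecMulVec u w *ᵥ x = (w ⬝ᵥ x) • u := by
  ext i
  simp only [mulVec, dotProduct, vecMulVec, of_apply, Pi.smul_apply, smul_eq_mul]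
  rw [Finset.sum_mul]
  exact Finset.sum_congr rfl fun j _ => by ring

lemma herm_vecMulVec (v : Fin n → ℝ) : (vecMulVec v v).IsHermitian := by
  ext i j; simp [vecMulVec, conjTranspose_apply, mul_comm]

lemma psd_vecMulVec (v : Fin n → ℝ) : (vecMulVec v v).PosSemidef := by
  refine posSemidef_iff_dotProduct_mulVec.mpr ⟨herm_vecMulVec v, fun x => ?_⟩
  have hx : star x = x := by simp
  rw [hx, vecMulVec_mulVec', dotProduct_smul, smul_eq_mul, dotProduct_comm]
  exact mul_self_nonneg _

lemma trace_vecMulVec' (u w : Fin n → ℝ) : (vecMulVec u w).trace = u ⬝ᵥ w := by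
  simp [Matrix.trace, vecMulVec, dotProduct, Matrix.diag]

lemma psd_smul {A : Mat} (hA : A.PosSemidef) {c : ℝ} (hc : 0 ≤ c) : (c • A).PosSemidef := by
  refine posSemidef_iff_dotProduct_mulVec.mpr ⟨?_, fun x => ?_⟩
  · have h := hA.1
    ext i j
    have h' := congrFun (congrFun h i) j
    simp only [conjTranspose_apply, star_trivial] at h' ⊢
    simp [Matrix.smul_apply, h']
  · rw [smul_mulVec, dotProduct_smul, smul_eq_mul]
    exact mul_nonneg hc ((posSemidef_iff_dotProduct_mulVec.mp hA).2 x)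

lemma psd_sum {ι : Type*} (s : Finset ι) (F : ι → Mat) (h : ∀ i ∈ s, (F i).PosSemidef) :
    (∑ i ∈ s, F i).PosSemidef := by
  classical
  induction s using Finset.induction with
  | empty => simpa using (Matrix.PosSemidef.zero : (0 : Mat).PosSemidef)
  | @insert a s ha ih =>
    rw [Finset.sum_insert ha]
    exact (h _ (Finset.mem_insert_self _ _)).add
      (ih fun i hi => h i (Finset.mem_insert_of_mem hi))

lemma spectral_sum {A : Mat} (hA : A.IsHermitian) :
    ∃ u : Fin n → Fin n → ℝ,
      (∀ i j, u i ⬝ᵥ u j = if i = j then 1 else 0) ∧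
      A = ∑ i, hA.eigenvalues i • vecMulVec (u i) (u i) := by
  classical
  set U : Mat := (hA.eigenvectorUnitary : Mat) with hU
  refine ⟨fun i k => U k i, ?_, ?_⟩
  · intro i j
    have h1 : star U * U = 1 := (Unitary.mem_iff.mp hA.eigenvectorUnitary.prop).1
    have h2 : (star U * U) i j = (1 : Mat) i j := by rw [h1]
    rw [mul_apply, one_apply] at h2
    simpa [dotProduct, Matrix.star_eq_conjTranspose, conjTranspose_apply] using h2
  · have hst := hA.spectral_theorem
    conv_lhs => rw [hst, Unitary.conjStarAlgAut_apply]
    ext a b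
    simp only [mul_apply, mul_diagonal, diagonal_apply, Matrix.sum_apply, Matrix.smul_apply,
      vecMulVec, of_apply, smul_eq_mul, Matrix.star_eq_conjTranspose, conjTranspose_apply,
      star_trivial, Function.comp_apply, RCLike.ofReal_real_eq_id, id_eq, mul_ite, mul_zero,
      ite_mul, zero_mul, Finset.sum_ite_eq', Finset.mem_univ, if_true]
    refine Finset.sum_congr rfl fun k _ => by ring

lemma psd_combo (u w : Fin n → ℝ) (p q r : ℝ) (hp : 0 ≤ p) (hq : 0 ≤ q) (h : r ^ 2 ≤ p * q) :
    (p • vecMulVec u u + q • vecMulVec w w +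
      r • (vecMulVec u w + vecMulVec w u)).PosSemidef := by
  refine posSemidef_iff_dotProduct_mulVec.mpr ⟨?_, fun x => ?_⟩
  · ext i j
    simp only [conjTranspose_apply, Matrix.add_apply, Matrix.smul_apply, vecMulVec, of_apply,
      smul_eq_mul, star_trivial]
    ring
  · have hx : star x = x := by simp
    rw [hx]
    have hmv : (p • vecMulVec u u + q • vecMulVec w w +
        r • (vecMulVec u w + vecMulVec w u)) *ᵥ x
        = p • ((u ⬝ᵥ x) • u) + q • ((w ⬝ᵥ x) • w)
          + r • ((w ⬝ᵥ x) • u + (u ⬝ᵥ x) • w) := by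
      simp [add_mulVec, smul_mulVec, vecMulVec_mulVec', mulVec_add]
    rw [hmv]
    simp only [dotProduct_add, dotProduct_smul, smul_eq_mul]
    set c1 := u ⬝ᵥ x
    set c2 := w ⬝ᵥ x
    have hxu : x ⬝ᵥ u = c1 := dotProduct_comm x u
    have hxw : x ⬝ᵥ w = c2 := dotProduct_comm x w
    rw [hxu, hxw]
    rcases eq_or_lt_of_le hp with hp0 | hp0
    · have hr : r = 0 := by nlinarith [sq_nonneg r]
      rw [hr, ← hp0]
      nlinarith [mul_self_nonneg c2]
    · nlinarith [sq_nonneg (p * c1 + r * c2), mul_nonneg (sub_nonneg.mpr h) (sq_nonneg c2)]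

lemma exists_st (α β ε : ℝ) (hε : 0 < ε) :
    ∃ s t : ℝ, |s| ≤ ε ∧ |t| ≤ ε ∧ ¬(s = 0 ∧ t = 0) ∧ s * α + t * β = 0 := by
  rcases eq_or_ne α 0 with h | h
  · exact ⟨ε, 0, by rw [abs_of_pos hε], by simpa using hε.le,
      fun hc => absurd hc.1 hε.ne', by simp [h]⟩
  · have hd : 0 < |α| + |β| := by
      have : 0 < |α| := abs_pos.mpr h
      have := abs_nonneg β
      linarith
    set c : ℝ := ε / (|α| + |β|) with hcdef
    have hc0 : 0 < c := div_pos hε hd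
    have hkey : (|α| + |β|) * c = ε := by
      rw [hcdef, mul_div_cancel₀]
      exact hd.ne'
    refine ⟨-β * c, α * c, ?_, ?_, ?_, by ring⟩
    · rw [abs_mul, abs_neg, abs_of_pos hc0]
      nlinarith [abs_nonneg α, abs_nonneg β]
    · rw [abs_mul, abs_of_pos hc0]
      nlinarith [abs_nonneg α, abs_nonneg β]
    · rintro ⟨-, ht⟩
      exact (mul_ne_zero h hc0.ne') ht


lemma rankone_extreme (v : Fin n → ℝ) (h1 : v ⬝ᵥ v = 1) :
    vecMulVec v v ∈ Set.extremePoints ℝ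
      {A : Mat | A.PosSemidef ∧ A.trace = 1} := by
  refine mem_extremePoints.mpr ⟨⟨psd_vecMulVec v, by rw [trace_vecMulVec', h1]⟩, ?_⟩
  rintro B ⟨hB, hBtr⟩ C ⟨hC, hCtr⟩ ⟨a, b, ha, hb, hab, hsum⟩
  have hBsym : Bᵀ = B := by
    ext i j
    have := congrFun (congrFun hB.1 i) j
    simpa [conjTranspose_apply, transpose_apply] using this
  have hker : ∀ x, v ⬝ᵥ x = 0 → B *ᵥ x = 0 := by
    intro x hvx
    have hAx : x ⬝ᵥ (vecMulVec v v *ᵥ x) = 0 := by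
      rw [vecMulVec_mulVec', hvx]; simp
    have hBx : 0 ≤ x ⬝ᵥ (B *ᵥ x) := by simpa using (posSemidef_iff_dotProduct_mulVec.mp hB).2 x
    have hCx : 0 ≤ x ⬝ᵥ (C *ᵥ x) := by simpa using (posSemidef_iff_dotProduct_mulVec.mp hC).2 x
    have hsplit : a * (x ⬝ᵥ (B *ᵥ x)) + b * (x ⬝ᵥ (C *ᵥ x)) = 0 := by
      have h' := congrArg (fun M : Mat => x ⬝ᵥ (M *ᵥ x)) hsum
      simpa [add_mulVec, smul_mulVec, dotProduct_add, dotProduct_smul, hAx] using h'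
    have hB0 : x ⬝ᵥ (B *ᵥ x) = 0 := by nlinarith
    exact (hB.dotProduct_mulVec_zero_iff x).mp (by simpa using hB0)
  set c := v ⬝ᵥ (B *ᵥ v) with hcdef
  have hz : B *ᵥ v = c • v := by
    set z := B *ᵥ v - c • v with hzdef
    have hvz : v ⬝ᵥ z = 0 := by
      simp only [hzdef, dotProduct_sub, dotProduct_smul, smul_eq_mul]
      rw [h1, ← hcdef]; ring
    have hBz : B *ᵥ z = 0 := hker z hvz
    have hzBv : z ⬝ᵥ (B *ᵥ v) = 0 := by
      rw [dotProduct_mulVec]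
      have : z ᵥ* B = B *ᵥ z := by
        conv_lhs => rw [← hBsym]
        rw [vecMul_transpose]
      rw [this, hBz, zero_dotProduct]
    have hzz : z ⬝ᵥ z = 0 := by
      have hzv : z ⬝ᵥ v = 0 := by rw [dotProduct_comm]; exact hvz
      calc z ⬝ᵥ z = z ⬝ᵥ (B *ᵥ v) - c * (z ⬝ᵥ v) := by
            simp only [hzdef]
            rw [dotProduct_sub, dotProduct_smul, smul_eq_mul]
        _ = 0 := by rw [hzBv, hzv]; ring
    have : z = 0 := (dotProduct_self_eq_zero).mp hzz
    rw [hzdef, sub_eq_zero] at this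
    exact this
  have hBall : ∀ x, B *ᵥ x = (c * (v ⬝ᵥ x)) • v := by
    intro x
    have hperp : v ⬝ᵥ (x - (v ⬝ᵥ x) • v) = 0 := by
      rw [dotProduct_sub, dotProduct_smul, h1, smul_eq_mul, mul_one, sub_self]
    have hxdec : (v ⬝ᵥ x) • v + (x - (v ⬝ᵥ x) • v) = x := by module
    calc B *ᵥ x = B *ᵥ ((v ⬝ᵥ x) • v + (x - (v ⬝ᵥ x) • v)) := by rw [hxdec]
      _ = (v ⬝ᵥ x) • (B *ᵥ v) + B *ᵥ (x - (v ⬝ᵥ x) • v) := by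
          rw [mulVec_add, mulVec_smul]
      _ = (v ⬝ᵥ x) • (c • v) + 0 := by rw [hz, hker _ hperp]
      _ = (c * (v ⬝ᵥ x)) • v := by rw [add_zero, smul_smul, mul_comm]
  have hBc : B = c • vecMulVec v v := by
    ext i j
    have h' := congrFun (hBall (Pi.single j 1)) i
    simp only [mulVec_single_one, col_apply, dotProduct_single, mul_one, Pi.smul_apply, smul_eq_mul] at h'
    simp only [Matrix.smul_apply, vecMulVec, of_apply, smul_eq_mul]
    rw [h']; ring
  have hc1 : c = 1 := by
    have htr := hBtr
    rw [hBc, trace_smul, trace_vecMulVec', h1, smul_eq_mul, mul_one] at htr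
    exact htr
  have hBA : B = vecMulVec v v := by rw [hBc, hc1, one_smul]
  refine ⟨hBA, ?_⟩
  have hCb : b • C = b • vecMulVec v v := by
    rw [hBA] at hsum
    have hb' : (1 : ℝ) - a = b := by linarith
    calc b • C = (a • vecMulVec v v + b • C) - a • vecMulVec v v := by abel
      _ = vecMulVec v v - a • vecMulVec v v := by rw [hsum]
      _ = ((1 : ℝ) - a) • vecMulVec v v := by rw [sub_smul, one_smul]
      _ = b • vecMulVec v v := by rw [hb']
  exact smul_right_injective Mat hb.ne' hCb

lemma key (f : Mat →ₗ[ℝ] ℝ) (A : Mat)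
    (hA : A ∈ Set.extremePoints ℝ
      {A : Mat | f A = 0 ∧ A.PosSemidef ∧ A.trace = 1}) :
    ∃ v : Fin n → ℝ, A = vecMulVec v v := by
  classical
  obtain ⟨⟨hfA, hpsd, htr⟩, hext⟩ := mem_extremePoints.mp hA
  obtain ⟨u, horth, hspec⟩ := spectral_sum hpsd.1
  set lam := hpsd.1.eigenvalues with hlam
  have hnn : ∀ k, 0 ≤ lam k := fun k => hpsd.eigenvalues_nonneg k
  by_cases h2 : ∃ i j, i ≠ j ∧ 0 < lam i ∧ 0 < lam j
  · exfalso
    obtain ⟨i, j, hij, hi, hj⟩ := h2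
    set uu := u i with huudef
    set ww := u j with hwwdef
    have huu : uu ⬝ᵥ uu = 1 := by simpa using horth i i
    have hww : ww ⬝ᵥ ww = 1 := by simpa using horth j j
    have huw : uu ⬝ᵥ ww = 0 := by simpa [hij] using horth i j
    have hwu : ww ⬝ᵥ uu = 0 := by simpa [hij.symm] using horth j i
    set X₁ : Mat := vecMulVec uu uu with hX₁
    set X₂ : Mat := vecMulVec ww ww with hX₂
    set Y : Mat := vecMulVec uu ww + vecMulVec ww uu with hY
    have hR : (A - lam i • X₁ - lam j • X₂).PosSemidef := by
      have e1 : A - lam i • X₁ - lam j • X₂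
          = ∑ k ∈ (Finset.univ.erase i).erase j, lam k • vecMulVec (u k) (u k) := by
        have hjmem : j ∈ Finset.univ.erase i :=
          Finset.mem_erase.mpr ⟨hij.symm, Finset.mem_univ j⟩
        conv_lhs => rw [hspec]
        rw [← Finset.add_sum_erase _ _ (Finset.mem_univ i),
          ← Finset.add_sum_erase _ _ hjmem]
        abel
      rw [e1]
      exact psd_sum _ _ fun k _ => psd_smul (psd_vecMulVec (u k)) (hnn k)
    set ε := min (lam i) (lam j) / 2 with hεdef
    have hε : 0 < ε := by
      have := lt_min hi hj
      positivity
    have hεi : ε ≤ lam i / 2 := by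
      have := min_le_left (lam i) (lam j); rw [hεdef]; linarith
    have hεj : ε ≤ lam j / 2 := by
      have := min_le_right (lam i) (lam j); rw [hεdef]; linarith
    obtain ⟨s, t, hs, ht, hstne, hlin⟩ :=
      exists_st (f (X₁ - X₂)) (f Y) ε hε
    obtain ⟨hs1, hs2⟩ := abs_le.mp hs
    obtain ⟨ht1, ht2⟩ := abs_le.mp ht
    set B : Mat := s • (X₁ - X₂) + t • Y with hBdef
    have hfB : f B = 0 := by
      rw [hBdef, map_add, LinearMap.map_smul, LinearMap.map_smul, smul_eq_mul, smul_eq_mul]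
      exact hlin
    have htrB : B.trace = 0 := by
      rw [hBdef, trace_add, trace_smul, trace_smul, trace_sub, hY, trace_add]
      rw [hX₁, hX₂, trace_vecMulVec', trace_vecMulVec', trace_vecMulVec', trace_vecMulVec']
      rw [huu, hww, huw, hwu]
      simp
    have hplus : (A + B).PosSemidef := by
      have hid : A + B = (A - lam i • X₁ - lam j • X₂)
          + ((lam i + s) • X₁ + (lam j - s) • X₂ + t • Y) := by
        rw [hBdef]; module
      rw [hid]
      refine hR.add ?_
      refine psd_combo uu ww _ _ _ (by linarith) (by linarith) ?_
      have htsq : t ^ 2 ≤ ε ^ 2 := by nlinarith [sq_abs t, abs_nonneg t]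
      have hA1 : ε ^ 2 ≤ (lam i / 2) * (lam j / 2) := by nlinarith
      have hA2 : (lam i / 2) * (lam j / 2) ≤ (lam i + s) * (lam j - s) :=
        mul_le_mul (by linarith) (by linarith) (by linarith) (by linarith)
      linarith
    have hminus : (A - B).PosSemidef := by
      have hid : A - B = (A - lam i • X₁ - lam j • X₂)
          + ((lam i - s) • X₁ + (lam j + s) • X₂ + (-t) • Y) := by
        rw [hBdef]; module
      rw [hid]
      refine hR.add ?_
      refine psd_combo uu ww _ _ _ (by linarith) (by linarith) ?_
      have htsq : (-t) ^ 2 ≤ ε ^ 2 := by nlinarith [sq_abs t, abs_nonneg t]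
      have hA1 : ε ^ 2 ≤ (lam i / 2) * (lam j / 2) := by nlinarith
      have hA2 : (lam i / 2) * (lam j / 2) ≤ (lam i - s) * (lam j + s) :=
        mul_le_mul (by linarith) (by linarith) (by linarith) (by linarith)
      linarith
    have hmem₁ : A - B ∈ {A : Mat | f A = 0 ∧ A.PosSemidef ∧ A.trace = 1} := by
      refine ⟨?_, hminus, ?_⟩
      · rw [map_sub, hfA, hfB, sub_zero]
      · rw [trace_sub, htr, htrB, sub_zero]
    have hmem₂ : A + B ∈ {A : Mat | f A = 0 ∧ A.PosSemidef ∧ A.trace = 1} := by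
      refine ⟨?_, hplus, ?_⟩
      · rw [map_add, hfA, hfB, add_zero]
      · rw [trace_add, htr, htrB, add_zero]
    have hseg : A ∈ openSegment ℝ (A - B) (A + B) :=
      ⟨1/2, 1/2, by norm_num, by norm_num, by norm_num, by module⟩
    have hB0 : B = 0 := by
      have h' := (hext _ hmem₁ _ hmem₂ hseg).1
      have : A - B = A := h'
      linear_combination (norm := module) -this
    have hBu : B *ᵥ uu = s • uu + t • ww := by
      rw [hBdef, add_mulVec, smul_mulVec, smul_mulVec, sub_mulVec]
      rw [hX₁, hX₂, hY, add_mulVec, vecMulVec_mulVec', vecMulVec_mulVec', vecMulVec_mulVec',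
        vecMulVec_mulVec', huu, hwu]
      module
    rw [hB0, zero_mulVec] at hBu
    have hs0 : s = 0 := by
      have h' := congrArg (fun y => uu ⬝ᵥ y) hBu
      simpa [dotProduct_add, dotProduct_smul, huu, huw, smul_eq_mul] using h'.symm
    have ht0 : t = 0 := by
      have h' := congrArg (fun y => ww ⬝ᵥ y) hBu
      simpa [dotProduct_add, dotProduct_smul, hwu, hww, smul_eq_mul] using h'.symm
    exact hstne ⟨hs0, ht0⟩
  · push_neg at h2
    by_cases hz : ∀ k, lam k = 0
    · refine ⟨0, ?_⟩
      have : A = 0 := by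
        rw [hspec]
        apply Finset.sum_eq_zero
        intro k _
        rw [hz k, zero_smul]
      rw [this]
      ext a b
      simp [vecMulVec]
    · push_neg at hz
      obtain ⟨i, hi⟩ := hz
      have hipos : 0 < lam i := (hnn i).lt_of_ne (Ne.symm hi)
      have hothers : ∀ k, k ≠ i → lam k = 0 := by
        intro k hk
        by_contra h
        have := h2 k i hk ((hnn k).lt_of_ne (Ne.symm h))
        linarith
      refine ⟨Real.sqrt (lam i) • u i, ?_⟩
      have hAi : A = lam i • vecMulVec (u i) (u i) := by
        rw [hspec]
        exact Finset.sum_eq_single i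
          (fun k _ hk => by rw [hothers k hk, zero_smul])
          (fun h => absurd (Finset.mem_univ i) h)
      have hss : Real.sqrt (lam i) * Real.sqrt (lam i) = lam i :=
        Real.mul_self_sqrt (hnn i)
      rw [hAi]
      ext a b
      simp only [Matrix.smul_apply, vecMulVec, of_apply, smul_eq_mul, Pi.smul_apply]
      linear_combination (-(u i a * u i b)) * hss


lemma pad_sum {M : Type*} [AddCommMonoid M] {k m : ℕ} (hkm : k ≤ m) (G : ℕ → M)
    (hG : ∀ j, k ≤ j → G j = 0) :
    ∑ i : Fin m, G i = ∑ i : Fin k, G i := by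
  rw [Fin.sum_univ_eq_sum_range, Fin.sum_univ_eq_sum_range]
  exact (Finset.sum_subset (Finset.range_subset_range.mpr hkm)
    (fun j _ hj => hG j (by simpa using hj))).symm

lemma isCompact_convexHull_fd {E : Type*} [NormedAddCommGroup E] [NormedSpace ℝ E]
    [FiniteDimensional ℝ E] {s : Set E} (hs : IsCompact s) :
    IsCompact (convexHull ℝ s) := by
  classical
  set m := Module.finrank ℝ E + 1 with hm
  set K : Set ((Fin m → ℝ) × (Fin m → E)) :=
    (stdSimplex ℝ (Fin m)) ×ˢ (Set.univ.pi fun _ => s) with hK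
  have hKc : IsCompact K := (isCompact_stdSimplex _ _).prod (isCompact_univ_pi fun _ => hs)
  have hcont : Continuous fun p : (Fin m → ℝ) × (Fin m → E) => ∑ i, p.1 i • p.2 i :=
    continuous_finset_sum _ fun i _ =>
      ((continuous_apply i).comp continuous_fst).smul ((continuous_apply i).comp continuous_snd)
  have himg : (fun p : (Fin m → ℝ) × (Fin m → E) => ∑ i, p.1 i • p.2 i) '' K
      = convexHull ℝ s := by
    apply Set.Subset.antisymm
    · rintro _ ⟨⟨wgt, pts⟩, ⟨⟨hw0, hw1⟩, hpts⟩, rfl⟩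
      exact (convex_convexHull ℝ s).sum_mem (fun i _ => hw0 i) hw1
        (fun i _ => subset_convexHull ℝ s (hpts i (Set.mem_univ i)))
    · intro x hx
      rw [convexHull_eq_union] at hx
      simp only [Set.mem_iUnion] at hx
      obtain ⟨t, hts, hai, hxt⟩ := hx
      have hne : t.Nonempty := by
        rcases Finset.eq_empty_or_nonempty t with rfl | h
        · rw [Finset.coe_empty, convexHull_empty] at hxt
          exact absurd hxt (Set.notMem_empty x)
        · exact h
      have hcard : t.card ≤ m := by
        haveI : Nonempty {y // y ∈ t} := ⟨⟨hne.choose, hne.choose_spec⟩⟩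
        have h1 := hai.finrank_vectorSpan_add_one
        rw [Fintype.card_coe] at h1
        have h2 : Module.finrank ℝ
            ↥(vectorSpan ℝ (Set.range (Subtype.val : {y // y ∈ t} → E)))
            ≤ Module.finrank ℝ E := Submodule.finrank_le _
        omega
      obtain ⟨y₀, hy₀⟩ := hne
      rw [Finset.convexHull_eq] at hxt
      obtain ⟨w, hw0, hw1, hwx⟩ := hxt
      have hx' : ∑ y ∈ t, w y • y = x := by
        rw [← hwx, Finset.centerMass_eq_of_sum_1 _ _ hw1]
        rfl
      set k := t.card with hk
      set o : Fin k ≃ {y // y ∈ t} := (t.equivFin.trans (finCongr hk.symm)).symm with ho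
      set g : ℕ → E := fun j => if h : j < k then (o ⟨j, h⟩ : E) else y₀ with hg
      set ww : ℕ → ℝ := fun j => if h : j < k then w (o ⟨j, h⟩ : E) else 0 with hww
      refine ⟨(fun i : Fin m => ww i, fun i : Fin m => g i), ⟨⟨?_, ?_⟩, ?_⟩, ?_⟩
      · intro i
        simp only [hww]
        split
        · exact hw0 _ (o _).2
        · exact le_refl 0
      · have hzero : ∀ j, k ≤ j → ww j = 0 := by
          intro j hj
          simp only [hww]
          rw [dif_neg (by omega)]
        calc ∑ i : Fin m, ww i = ∑ i : Fin k, ww i := pad_sum hcard ww hzero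
          _ = ∑ i : Fin k, w (o i) := by
              refine Finset.sum_congr rfl fun i _ => ?_
              simp only [hww]
              rw [dif_pos i.isLt]
          _ = ∑ y : {y // y ∈ t}, w y := Equiv.sum_comp o (fun y : {y // y ∈ t} => w y)
          _ = ∑ y ∈ t, w y := Finset.sum_coe_sort t w
          _ = 1 := hw1
      · intro i _
        simp only [hg]
        split
        · exact hts (o _).2
        · exact hts hy₀
      · show ∑ i : Fin m, ww i • g i = x
        have hzero : ∀ j, k ≤ j → ww j • g j = 0 := by
          intro j hj
          simp only [hww]
          rw [dif_neg (by omega), zero_smul]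
        calc ∑ i : Fin m, ww i • g i = ∑ i : Fin k, ww i • g i :=
              pad_sum hcard (fun j => ww j • g j) hzero
          _ = ∑ i : Fin k, w (o i) • (o i : E) := by
              refine Finset.sum_congr rfl fun i _ => ?_
              simp only [hww, hg]
              rw [dif_pos i.isLt, dif_pos i.isLt]
          _ = ∑ y : {y // y ∈ t}, w y • (y : E) :=
              Equiv.sum_comp o (fun y : {y // y ∈ t} => w y • (y : E))
          _ = ∑ y ∈ t, w y • y := Finset.sum_coe_sort t (fun y => w y • y)
          _ = x := hx'
  rw [← himg]
  exact hKc.image hcont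


lemma isClosed_psd : IsClosed {A : Mat | A.PosSemidef} := by
  have heq : {A : Mat | A.PosSemidef} =
      {A : Mat | Aᴴ = A} ∩ ⋂ x : Fin n → ℝ, {A : Mat | 0 ≤ x ⬝ᵥ (A *ᵥ x)} := by
    ext A
    simp only [Set.mem_setOf_eq, Set.mem_inter_iff, Set.mem_iInter]
    constructor
    · intro h
      exact ⟨h.1, fun x => by simpa using (posSemidef_iff_dotProduct_mulVec.mp h).2 x⟩
    · intro h
      exact posSemidef_iff_dotProduct_mulVec.mpr ⟨h.1, fun x => by simpa using h.2 x⟩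
  rw [heq]
  refine IsClosed.inter ?_ (isClosed_iInter fun x => ?_)
  · exact isClosed_eq continuous_id.matrix_conjTranspose continuous_id
  · exact isClosed_le continuous_const
      (Continuous.dotProduct continuous_const
        (continuous_id.matrix_mulVec continuous_const))

lemma entry_bound {A : Mat} (hpsd : A.PosSemidef) (htr : A.trace = 1) :
    ∀ i j, |A i j| ≤ 1 := by
  have hq : ∀ x : Fin n → ℝ, 0 ≤ x ⬝ᵥ (A *ᵥ x) := fun x => by simpa using (posSemidef_iff_dotProduct_mulVec.mp hpsd).2 x
  have hd : ∀ i, 0 ≤ A i i := by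
    intro i
    have := hq (Pi.single i 1)
    simpa [Matrix.mulVec_single_one, Matrix.col_apply, single_dotProduct] using this
  have htr' : ∑ k, A k k = 1 := by
    rw [← htr]
    rfl
  have hd1 : ∀ i, A i i ≤ 1 := by
    intro i
    have := Finset.single_le_sum (f := fun k => A k k) (fun k _ => hd k) (Finset.mem_univ i)
    linarith
  intro i j
  rcases eq_or_ne i j with rfl | hij
  · exact abs_le.mpr ⟨by linarith [hd i], hd1 i⟩
  · have hsym : A j i = A i j := by
      have := congrFun (congrFun hpsd.1 i) j
      simpa [conjTranspose_apply] using this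
    have h1 := hq (Pi.single i 1 + Pi.single j 1)
    have h2 := hq (Pi.single i 1 - Pi.single j 1)
    simp only [Matrix.mulVec_add, Matrix.mulVec_sub, dotProduct_add, dotProduct_sub,
      add_dotProduct, sub_dotProduct, Matrix.mulVec_single_one, Matrix.col_apply, single_dotProduct,
      mul_one, one_mul] at h1 h2
    refine abs_le.mpr ⟨?_, ?_⟩
    · have := hd1 i; have := hd1 j; linarith
    · have := hd1 i; have := hd1 j; linarith

lemma norm_le_one_of_entries {A : Mat} (h : ∀ i j, |A i j| ≤ 1) : ‖A‖ ≤ 1 := by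
  rw [Matrix.norm_le_iff (by norm_num : (0:ℝ) ≤ 1)]
  intro i
  intro j
  rw [Real.norm_eq_abs]
  exact h i j

lemma convex_slice (f : Mat →ₗ[ℝ] ℝ) :
    Convex ℝ {A : Mat | f A = 0 ∧ A.PosSemidef ∧ A.trace = 1} := by
  rintro A ⟨hfA, hpA, htA⟩ B ⟨hfB, hpB, htB⟩ a b ha hb hab
  refine ⟨?_, (psd_smul hpA ha).add (psd_smul hpB hb), ?_⟩
  · rw [map_add, LinearMap.map_smul, LinearMap.map_smul, hfA, hfB]
    simp
  · rw [trace_add, trace_smul, trace_smul, htA, htB, smul_eq_mul, smul_eq_mul,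
      mul_one, mul_one, hab]

lemma isCompact_slice (f : Mat →ₗ[ℝ] ℝ) :
    IsCompact {A : Mat | f A = 0 ∧ A.PosSemidef ∧ A.trace = 1} := by
  have hclosed : IsClosed {A : Mat | f A = 0 ∧ A.PosSemidef ∧ A.trace = 1} := by
    have heq : {A : Mat | f A = 0 ∧ A.PosSemidef ∧ A.trace = 1} =
        {A : Mat | f A = 0} ∩ ({A : Mat | A.PosSemidef} ∩ {A : Mat | A.trace = 1}) := rfl
    rw [heq]
    refine IsClosed.inter ?_ (IsClosed.inter isClosed_psd ?_)
    · exact isClosed_eq f.continuous_of_finiteDimensional continuous_const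
    · exact isClosed_eq continuous_id.matrix_trace continuous_const
  refine (isCompact_closedBall (0 : Mat) 1).of_isClosed_subset hclosed ?_
  rintro A ⟨-, hpA, htA⟩
  rw [Metric.mem_closedBall, dist_zero_right]
  exact norm_le_one_of_entries (entry_bound hpA htA)

lemma isCompact_S (f : Mat →ₗ[ℝ] ℝ) :
    IsCompact {A : Mat | f A = 0 ∧ A.trace = 1 ∧ ∃ v : Fin n → ℝ, A = vecMulVec v v} := by
  set T : Set (Fin n → ℝ) := {v | f (vecMulVec v v) = 0 ∧ v ⬝ᵥ v = 1} with hT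
  have hTclosed : IsClosed T := by
    refine IsClosed.inter ?_ ?_
    · exact isClosed_eq (f.continuous_of_finiteDimensional.comp
        (continuous_id.matrix_vecMulVec continuous_id)) continuous_const
    · exact isClosed_eq (continuous_id.dotProduct continuous_id) continuous_const
  have hTc : IsCompact T := by
    refine (isCompact_closedBall (0 : Fin n → ℝ) 1).of_isClosed_subset hTclosed ?_
    rintro v ⟨-, hvv⟩
    rw [Metric.mem_closedBall, dist_zero_right,
      pi_norm_le_iff_of_nonneg (by norm_num : (0:ℝ) ≤ 1)]
    intro i
    rw [Real.norm_eq_abs, abs_le_one_iff_mul_self_le_one]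
    have hsum := Finset.single_le_sum (f := fun k => v k * v k)
      (fun k _ => mul_self_nonneg (v k)) (Finset.mem_univ i)
    have hsum' : v i * v i ≤ ∑ x : Fin n, v x * v x := hsum
    have h1 : ∑ k : Fin n, v k * v k = 1 := hvv
    linarith
  have himg : (fun v => vecMulVec v v) '' T
      = {A : Mat | f A = 0 ∧ A.trace = 1 ∧ ∃ v : Fin n → ℝ, A = vecMulVec v v} := by
    ext A
    constructor
    · rintro ⟨v, ⟨hfv, hvv⟩, rfl⟩
      exact ⟨hfv, by rw [trace_vecMulVec', hvv], v, rfl⟩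
    · rintro ⟨hfA, htrA, v, rfl⟩
      refine ⟨v, ⟨hfA, ?_⟩, rfl⟩
      rwa [trace_vecMulVec'] at htrA
  rw [← himg]
  exact hTc.image (continuous_id.matrix_vecMulVec continuous_id)

end SliceAux


/-- For a linear hyperplane `H = ker f` in the space of symmetric tensors
(modelled as symmetric matrices, with the projectivized PSD cone modelled by its
trace-one slice), every extreme point of `P(H ∩ S²V^{≥0})` is an extreme point of
`P(S²V^{≥0})`, and `P(H ∩ S²V^{≥0})` is the convex hull of the rank-one points
`H ∩ S²P(V)`. -/
theorem extremePoints_hyperplane_slice_and_hull (n : ℕ)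
    (f : Matrix (Fin n) (Fin n) ℝ →ₗ[ℝ] ℝ)
    (hf : ∃ A : Matrix (Fin n) (Fin n) ℝ, A.IsSymm ∧ f A ≠ 0) :
    (∀ A ∈ Set.extremePoints ℝ
        {A : Matrix (Fin n) (Fin n) ℝ | f A = 0 ∧ A.PosSemidef ∧ A.trace = 1},
      A ∈ Set.extremePoints ℝ
        {A : Matrix (Fin n) (Fin n) ℝ | A.PosSemidef ∧ A.trace = 1}) ∧
    {A : Matrix (Fin n) (Fin n) ℝ | f A = 0 ∧ A.PosSemidef ∧ A.trace = 1} =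
      convexHull ℝ {A : Matrix (Fin n) (Fin n) ℝ |
        f A = 0 ∧ A.trace = 1 ∧ ∃ v : Fin n → ℝ, A = Matrix.vecMulVec v v} := by
  constructor
  · intro A hA
    obtain ⟨v, rfl⟩ := SliceAux.key f A hA
    have h1 : v ⬝ᵥ v = 1 := by
      have h := hA.1.2.2
      rwa [SliceAux.trace_vecMulVec'] at h
    exact SliceAux.rankone_extreme v h1
  · apply Set.Subset.antisymm
    · haveI : LocallyConvexSpace ℝ (Matrix (Fin n) (Fin n) ℝ) := NormedSpace.toLocallyConvexSpace
      have hKM := closure_convexHull_extremePoints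
        (SliceAux.isCompact_slice f) (SliceAux.convex_slice f)
      have hsub : Set.extremePoints ℝ
          {A : Matrix (Fin n) (Fin n) ℝ | f A = 0 ∧ A.PosSemidef ∧ A.trace = 1} ⊆
          {A : Matrix (Fin n) (Fin n) ℝ |
            f A = 0 ∧ A.trace = 1 ∧ ∃ v : Fin n → ℝ, A = Matrix.vecMulVec v v} := by
        intro A hA
        obtain ⟨v, rfl⟩ := SliceAux.key f A hA
        exact ⟨hA.1.1, hA.1.2.2, v, rfl⟩
      intro x hx
      have hx' : x ∈ closure (convexHull ℝ (Set.extremePoints ℝ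
          {A : Matrix (Fin n) (Fin n) ℝ | f A = 0 ∧ A.PosSemidef ∧ A.trace = 1})) :=
        hKM.symm ▸ hx
      have hmono := closure_mono (convexHull_mono hsub) hx'
      have hclosed : IsClosed (convexHull ℝ {A : Matrix (Fin n) (Fin n) ℝ |
          f A = 0 ∧ A.trace = 1 ∧ ∃ v : Fin n → ℝ, A = Matrix.vecMulVec v v}) :=
        (SliceAux.isCompact_convexHull_fd (SliceAux.isCompact_S f)).isClosed
      rwa [hclosed.closure_eq] at hmono
    · refine convexHull_min ?_ (SliceAux.convex_slice f)
      rintro A ⟨hfA, htrA, v, rfl⟩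
      exact ⟨hfA, SliceAux.psd_vecMulVec v, htrA⟩
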